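/- With λ_α as above, in the monoid algebra F_p[X_*(T)_-] one has the inclusions of ideals (e^{λ_α} : α ∈ Δ) ⊆ (e^λ : λ ∈ X_*(T)_-∖Δ^⊥) ⊆ √(e^{λ_α} : α ∈ Δ); in particular these two ideals have the same radical. -/
import Mathlib


/-!
Statement 6: With `λα` as before (`λα i ∈ X_*(T)_-` with `⟨α i, λα i⟩ < 0` and
`⟨α j, λα i⟩ = 0` for `j ≠ i`), in the monoid algebra `F_p[X_*(T)_-]` one has the
inclusions of ideals
  `(e^{λα i} : i ∈ Δ) ⊆ (e^λ : λ ∈ X_*(T)_- ∖ Δ^⊥) ⊆ √(e^{λα i} : i ∈ Δ)`;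
in particular these two ideals have the same radical.  Here
`Δ^⊥ = {λ : ⟨α i, λ⟩ = 0 for all i}`.
-/

/-- `{λ ∈ X : ⟨α i, λ⟩ ≤ 0 for all i ∈ S}`. -/
def antidomSubmonoid {X : Type} [AddCommGroup X] {ι : Type} (α : ι → X →+ ℤ)
    (S : Set ι) : AddSubmonoid X where
  carrier := {x | ∀ i ∈ S, α i x ≤ 0}
  zero_mem' := by intro i _; simp
  add_mem' := by
    intro a b ha hb i hi
    simpa [map_add] using add_nonpos (ha i hi) (hb i hi)

theorem aux_mem_radical
    (p : ℕ) [Fact p.Prime]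
    {X : Type} [AddCommGroup X] {ι : Type} [Fintype ι]
    (α : ι → X →+ ℤ)
    (lam : ι → antidomSubmonoid α (Set.univ : Set ι))
    (hneg : ∀ i, α i (lam i : X) < 0)
    (horth : ∀ i j, j ≠ i → α j (lam i : X) = 0)
    (m : antidomSubmonoid α (Set.univ : Set ι)) (hm : ¬ ∀ i, α i (m : X) = 0) :
    AddMonoidAlgebra.single m (1 : ZMod p) ∈
      (Ideal.span (Set.range fun i => AddMonoidAlgebra.single (lam i) (1 : ZMod p))).radical := by
  obtain ⟨i0, hi0⟩ := not_forall.mp hm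
  have hm' : ∀ i, α i (m : X) ≤ 0 := fun i => m.2 i (Set.mem_univ i)
  have hi0' : α i0 (m : X) < 0 := lt_of_le_of_ne (hm' i0) hi0
  set n : ℕ := (-(α i0 (lam i0 : X))).toNat with hn
  have hnz : (n : ℤ) = -(α i0 (lam i0 : X)) := Int.toNat_of_nonneg (by linarith [hneg i0])
  have hν : (n • (m : X) - (lam i0 : X)) ∈ antidomSubmonoid α (Set.univ : Set ι) := by
    intro j _
    have h1 : α j (n • (m : X) - (lam i0 : X)) = (n : ℤ) * α j (m : X) - α j (lam i0 : X) := by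
      simp [nsmul_eq_mul]
    rcases eq_or_ne j i0 with rfl | hj
    · rw [h1, hnz]
      nlinarith [hneg j, hi0']
    · rw [h1, horth i0 j hj]
      nlinarith [hm' j, (Nat.cast_nonneg n : (0:ℤ) ≤ n)]
  set ν : antidomSubmonoid α (Set.univ : Set ι) := ⟨_, hν⟩ with hνdef
  have hsum : n • m = ν + lam i0 := by
    apply Subtype.ext
    push_cast [hνdef]
    abel
  refine ⟨n, ?_⟩
  have key : AddMonoidAlgebra.single (ν + lam i0) (1 : ZMod p) =
      AddMonoidAlgebra.single ν 1 * AddMonoidAlgebra.single (lam i0) 1 := by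
    rw [AddMonoidAlgebra.single_mul_single, one_mul]
  rw [AddMonoidAlgebra.single_pow, one_pow, hsum, key]
  exact Ideal.mul_mem_left _ _ (Ideal.subset_span ⟨i0, rfl⟩)

theorem supersingular_ideal_radical
    (p : ℕ) [Fact p.Prime]
    {X : Type} [AddCommGroup X] {ι : Type} [Fintype ι]
    (α : ι → X →+ ℤ)
    (lam : ι → antidomSubmonoid α (Set.univ : Set ι))   -- the elements λα
    (hneg : ∀ i, α i (lam i : X) < 0)
    (horth : ∀ i j, j ≠ i → α j (lam i : X) = 0) :
    letI I₁ : Ideal (AddMonoidAlgebra (ZMod p) (antidomSubmonoid α (Set.univ : Set ι))) :=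
      Ideal.span (Set.range fun i => AddMonoidAlgebra.single (lam i) (1 : ZMod p))
    letI I₂ : Ideal (AddMonoidAlgebra (ZMod p) (antidomSubmonoid α (Set.univ : Set ι))) :=
      Ideal.span {x | ∃ m : antidomSubmonoid α (Set.univ : Set ι),
        (¬ ∀ i, α i (m : X) = 0) ∧ x = AddMonoidAlgebra.single m (1 : ZMod p)}
    I₁ ≤ I₂ ∧ I₂ ≤ I₁.radical ∧ I₁.radical = I₂.radical := by
  set I₁ : Ideal (AddMonoidAlgebra (ZMod p) (antidomSubmonoid α (Set.univ : Set ι))) :=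
    Ideal.span (Set.range fun i => AddMonoidAlgebra.single (lam i) (1 : ZMod p)) with hI1
  set I₂ : Ideal (AddMonoidAlgebra (ZMod p) (antidomSubmonoid α (Set.univ : Set ι))) :=
    Ideal.span {x | ∃ m : antidomSubmonoid α (Set.univ : Set ι),
      (¬ ∀ i, α i (m : X) = 0) ∧ x = AddMonoidAlgebra.single m (1 : ZMod p)} with hI2
  have h12 : I₁ ≤ I₂ := by
    rw [Ideal.span_le]
    rintro x ⟨i, rfl⟩
    exact Ideal.subset_span ⟨lam i, fun h => absurd (h i) (ne_of_lt (hneg i)), rfl⟩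
  have h2r : I₂ ≤ I₁.radical := by
    rw [Ideal.span_le]
    rintro x ⟨m, hm, rfl⟩
    exact aux_mem_radical p α lam hneg horth m hm
  refine ⟨h12, h2r, le_antisymm (Ideal.radical_mono h12) ?_⟩
  calc I₂.radical ≤ I₁.radical.radical := Ideal.radical_mono h2r
    _ = I₁.radical := Ideal.radical_idem _
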